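/- Fix a ∈ ℝ^m with a₁ ≥ a₂ ≥ … ≥ a_m ≥ 0, not all zero. For η ≥ 0 define f(η) = (Σ_{i=1}^{k} a_i)² / (k+η)² on the interval where (Σ_{i=1}^{k−1} a_i)/a_k − (k−1) ≤ η < (Σ_{i=1}^{k} a_i)/a_{k+1} − k (with a_{m+1} := 0 and the last interval extending to +∞). Then f is continuous and strictly decreasing on [0,∞), f(0) = a₁², and f(η) → 0 as η → ∞. -/

import Mathlib

lemma contOn_finset_sup' {ι : Type*} {t : Set ℝ} (s : Finset ι) (hs : s.Nonempty)
    (g : ι → ℝ → ℝ) (hg : ∀ i, ContinuousOn (g i) t) :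
    ContinuousOn (fun x => s.sup' hs fun i => g i x) t := by
  induction hs using Finset.Nonempty.cons_induction with
  | singleton a => simpa using hg a
  | cons a s ha hne ih =>
    exact ContinuousOn.congr ((hg a).sup ih) fun x _ => Finset.sup'_cons hne _

/-- Properties of the per-group waterfilling function
`f(η) = (Σ_{i=1}^k a_i)²/(k+η)²` on the interval
`(Σ_{i=1}^{k-1} a_i)/a_k − (k−1) ≤ η < (Σ_{i=1}^k a_i)/a_{k+1} − k`
(conditions stated in product form so that `a_{k+1} = 0` gives the last
interval extending to `+∞`): `f` is continuous and strictly decreasing on `[0,∞)`,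
`f(0) = a₁²`, and `f(η) → 0` as `η → ∞`. -/
theorem waterfilling_props {m : ℕ} (a : Fin (m + 1) → ℝ)
    (hsort : ∀ i j : Fin (m + 1), i ≤ j → a j ≤ a i)
    (hnn : ∀ i, 0 ≤ a i) (hne : ∃ i, a i ≠ 0)
    (f : ℝ → ℝ)
    (hf : ∀ η : ℝ, 0 ≤ η → ∀ k : Fin (m + 1),
      (∑ i ∈ Finset.univ.filter (fun i => i < k), a i) ≤ a k * (η + (k : ℝ)) →
      (if h : (k : ℕ) + 1 < m + 1 then a ⟨(k : ℕ) + 1, h⟩ else 0) * (η + (k : ℝ) + 1) <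
          (∑ i ∈ Finset.univ.filter (fun i => i ≤ k), a i) →
      f η = (∑ i ∈ Finset.univ.filter (fun i => i ≤ k), a i) ^ 2 / ((k : ℝ) + 1 + η) ^ 2) :
    ContinuousOn f (Set.Ici 0) ∧ StrictAntiOn f (Set.Ici 0) ∧ f 0 = (a 0) ^ 2 ∧
      Filter.Tendsto f Filter.atTop (nhds 0) := by
  classical
  have hm : (Finset.univ : Finset (Fin (m + 1))).Nonempty := Finset.univ_nonempty
  set S : Fin (m + 1) → ℝ := fun k => ∑ i ∈ Finset.univ.filter (fun i => i ≤ k), a i with hSdef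
  -- a 0 is positive
  have ha0 : 0 < a 0 := by
    obtain ⟨i, hi⟩ := hne
    have h1 : 0 < a i := lt_of_le_of_ne (hnn i) (Ne.symm hi)
    exact lt_of_lt_of_le h1 (hsort 0 i (Fin.zero_le i))
  -- each partial sum is positive
  have hSpos : ∀ k, 0 < S k := by
    intro k
    have h0 : (0 : Fin (m + 1)) ∈ Finset.univ.filter (fun i => i ≤ k) := by
      simp [Fin.zero_le]
    calc (0 : ℝ) < a 0 := ha0
      _ ≤ S k := Finset.single_le_sum (fun i _ => hnn i) h0
  -- decomposition of S k
  have hsum : ∀ k : Fin (m + 1),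
      S k = (∑ i ∈ Finset.univ.filter (fun i => i < k), a i) + a k := by
    intro k
    have h1 : Finset.univ.filter (fun i : Fin (m + 1) => i ≤ k)
        = insert k (Finset.univ.filter (fun i => i < k)) := by
      ext i
      simp only [Finset.mem_filter, Finset.mem_univ, true_and, Finset.mem_insert,
        Fin.le_def, Fin.lt_def, Fin.ext_iff]
      omega
    rw [hSdef]
    simp only
    rw [h1, Finset.sum_insert (by simp)]
    ring
  set G : ℝ → ℝ := fun η => Finset.univ.sup' hm (fun k => S k / ((k : ℝ) + 1 + η)) with hGdef
  have hden : ∀ (k : Fin (m + 1)) (η : ℝ), 0 ≤ η → 0 < (k : ℝ) + 1 + η := by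
    intro k η hη
    have : (0 : ℝ) ≤ (k : ℝ) := Nat.cast_nonneg _
    linarith
  -- the key identity
  have key : ∀ η : ℝ, 0 ≤ η → f η = (G η) ^ 2 := by
    intro η hη
    set F := Finset.univ.filter (fun k : Fin (m + 1) => S k / ((k : ℝ) + 1 + η) = G η) with hFdef
    have hFne : F.Nonempty := by
      obtain ⟨k, _, hk⟩ := Finset.exists_mem_eq_sup' hm (fun k => S k / ((k : ℝ) + 1 + η))
      exact ⟨k, by simp [hFdef, hGdef, hk.symm]⟩
    set K := F.max' hFne with hKdef
    have hKmem : K ∈ F := F.max'_mem hFne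
    have hK : S K / ((K : ℝ) + 1 + η) = G η := by
      have := hKmem; rw [hFdef, Finset.mem_filter] at this; exact this.2
    have hmax : ∀ k : Fin (m + 1), S k / ((k : ℝ) + 1 + η) ≤ G η := fun k =>
      Finset.le_sup' (fun k : Fin (m + 1) => S k / ((k : ℝ) + 1 + η)) (Finset.mem_univ k)
    have hlt : ∀ k : Fin (m + 1), K < k → S k / ((k : ℝ) + 1 + η) < G η := by
      intro k hKk
      rcases lt_or_eq_of_le (hmax k) with h | h
      · exact h
      · exfalso
        have hk : k ∈ F := by rw [hFdef, Finset.mem_filter]; exact ⟨Finset.mem_univ k, h⟩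
        exact absurd (F.le_max' k hk) (not_le.mpr hKk)
    -- condition 1
    have hcond1 : (∑ i ∈ Finset.univ.filter (fun i => i < K), a i) ≤ a K * (η + (K : ℝ)) := by
      rcases Nat.eq_zero_or_pos (K : ℕ) with h0 | h0
      · have hempty : Finset.univ.filter (fun i : Fin (m + 1) => i < K) = ∅ := by
          ext i
          simp only [Finset.mem_filter, Finset.mem_univ, true_and, Finset.notMem_empty,
            iff_false, Fin.lt_def, h0]
          omega
        rw [hempty, Finset.sum_empty]
        have : (K : ℝ) = 0 := by exact_mod_cast h0
        rw [this]
        have := hnn K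
        nlinarith
      · set P : Fin (m + 1) := ⟨(K : ℕ) - 1, by omega⟩ with hPdef
        have hPK : ((P : ℕ) : ℝ) + 1 = (K : ℝ) := by
          have : (P : ℕ) + 1 = (K : ℕ) := by simp [hPdef]; omega
          exact_mod_cast this
        have hfilter : Finset.univ.filter (fun i : Fin (m + 1) => i < K)
            = Finset.univ.filter (fun i => i ≤ P) := by
          ext i
          simp only [Finset.mem_filter, Finset.mem_univ, true_and, Fin.lt_def, Fin.le_def,
            hPdef]
          omega
        rw [hfilter]
        have hP : S P / ((P : ℝ) + 1 + η) ≤ S K / ((K : ℝ) + 1 + η) := hK ▸ hmax P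
        rw [hPK] at hP
        have hd1 : 0 < (K : ℝ) + η := by
          have : (1 : ℝ) ≤ (K : ℝ) := by exact_mod_cast h0
          linarith
        have hd2 : 0 < (K : ℝ) + 1 + η := hden K η hη
        rw [div_le_div_iff₀ hd1 hd2] at hP
        have hSKP : S K = S P + a K := by
          rw [hsum K, hfilter]
        nlinarith [hP, hSKP]
    -- condition 2
    have hcond2 : (if h : (K : ℕ) + 1 < m + 1 then a ⟨(K : ℕ) + 1, h⟩ else 0)
        * (η + (K : ℝ) + 1) < S K := by
      by_cases h : (K : ℕ) + 1 < m + 1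
      · rw [dif_pos h]
        set K1 : Fin (m + 1) := ⟨(K : ℕ) + 1, h⟩ with hK1def
        have hKK1 : K < K1 := by simp [Fin.lt_def, hK1def]
        have hK1 : S K1 / ((K1 : ℝ) + 1 + η) < S K / ((K : ℝ) + 1 + η) :=
          hK ▸ hlt K1 hKK1
        have hK1c : ((K1 : ℕ) : ℝ) = (K : ℝ) + 1 := by
          have : (K1 : ℕ) = (K : ℕ) + 1 := rfl
          rw [this]; push_cast; ring
        have hfilter : Finset.univ.filter (fun i : Fin (m + 1) => i < K1)
            = Finset.univ.filter (fun i => i ≤ K) := by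
          ext i
          simp only [Finset.mem_filter, Finset.mem_univ, true_and, Fin.lt_def, Fin.le_def,
            hK1def]
          omega
        have hSK1 : S K1 = S K + a K1 := by
          rw [hsum K1, hfilter]
        rw [hSK1, hK1c] at hK1
        have hd1 : 0 < (K : ℝ) + 1 + 1 + η := by
          have : (0 : ℝ) ≤ (K : ℝ) := Nat.cast_nonneg _
          linarith
        have hd2 : 0 < (K : ℝ) + 1 + η := hden K η hη
        rw [div_lt_div_iff₀ hd1 hd2] at hK1
        nlinarith [hK1]
      · rw [dif_neg h]
        simpa using hSpos K
    have := hf η hη K hcond1 hcond2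
    rw [this, ← hK, div_pow]
  -- positivity of G
  have hGpos : ∀ η : ℝ, 0 ≤ η → 0 < G η := by
    intro η hη
    have h1 : S 0 / ((0 : Fin (m + 1)) + 1 + η) ≤ G η :=
      Finset.le_sup' (fun k : Fin (m + 1) => S k / ((k : ℝ) + 1 + η)) (Finset.mem_univ 0)
    have h2 : 0 < S 0 / (((0 : Fin (m + 1)) : ℝ) + 1 + η) :=
      div_pos (hSpos 0) (hden 0 η hη)
    exact lt_of_lt_of_le h2 h1
  -- G is strictly decreasing
  have hGanti : StrictAntiOn G (Set.Ici 0) := by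
    intro x hx y hy hxy
    simp only [Set.mem_Ici] at hx hy
    obtain ⟨k, _, hk⟩ := Finset.exists_mem_eq_sup' hm (fun k => S k / ((k : ℝ) + 1 + y))
    have h1 : G y = S k / ((k : ℝ) + 1 + y) := hk
    have h2 : S k / ((k : ℝ) + 1 + y) < S k / ((k : ℝ) + 1 + x) := by
      apply div_lt_div_of_pos_left (hSpos k) (hden k x hx)
      linarith
    calc G y = S k / ((k : ℝ) + 1 + y) := h1
      _ < S k / ((k : ℝ) + 1 + x) := h2
      _ ≤ G x := Finset.le_sup' (fun k : Fin (m + 1) => S k / ((k : ℝ) + 1 + x))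
          (Finset.mem_univ k)
  refine ⟨?_, ?_, ?_, ?_⟩
  · -- continuity
    apply ContinuousOn.congr (f := fun η => (G η) ^ 2)
    · apply ContinuousOn.pow
      apply contOn_finset_sup'
      intro k
      apply ContinuousOn.div continuousOn_const (by fun_prop)
      intro η hη
      exact ne_of_gt (hden k η hη)
    · intro η hη
      exact key η hη
  · -- strict antitonicity
    intro x hx y hy hxy
    rw [key x hx, key y hy]
    have h1 : G y < G x := hGanti hx hy hxy
    have h2 : 0 < G y := hGpos y hy
    nlinarith
  · -- value at 0
    rw [key 0 le_rfl]
    have hG0 : G 0 = a 0 := by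
      apply le_antisymm
      · apply Finset.sup'_le
        intro k _
        rw [div_le_iff₀ (hden k 0 le_rfl)]
        have hcard : (Finset.univ.filter (fun i : Fin (m + 1) => i ≤ k)).card = (k : ℕ) + 1 := by
          have : Finset.univ.filter (fun i : Fin (m + 1) => i ≤ k) = Finset.Iic k := by
            ext i; simp
          rw [this, Fin.card_Iic]
        have hb : S k ≤ ((k : ℕ) + 1) • a 0 := by
          rw [← hcard]
          apply Finset.sum_le_card_nsmul
          intro i _
          exact hsort 0 i (Fin.zero_le i)
        rw [nsmul_eq_mul] at hb
        push_cast at hb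
        linarith
      · have h1 : S 0 / (((0 : Fin (m + 1)) : ℝ) + 1 + 0) ≤ G 0 :=
          Finset.le_sup' (fun k : Fin (m + 1) => S k / ((k : ℝ) + 1 + 0)) (Finset.mem_univ 0)
        have hS0 : S 0 = a 0 := by
          rw [hSdef]
          simp only
          have : Finset.univ.filter (fun i : Fin (m + 1) => i ≤ 0) = {0} := by
            ext i; simp [Fin.le_zero_iff]
          rw [this, Finset.sum_singleton]
        rw [hS0] at h1
        simpa using h1
    rw [hG0]
  · -- limit at infinity
    set C := S (Fin.last m) with hCdef
    have hbound : ∀ η : ℝ, 0 ≤ η → f η ≤ (C / (1 + η)) ^ 2 := by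
      intro η hη
      rw [key η hη]
      have h1 : G η ≤ C / (1 + η) := by
        apply Finset.sup'_le
        intro k _
        apply div_le_div₀ (le_of_lt (hSpos (Fin.last m)))
        · rw [hSdef]
          apply Finset.sum_le_sum_of_subset_of_nonneg
          · intro i hi
            simp only [Finset.mem_filter, Finset.mem_univ, true_and] at *
            exact Fin.le_last i
          · intro i _ _; exact hnn i
        · linarith
        · have : (0 : ℝ) ≤ (k : ℝ) := Nat.cast_nonneg _
          linarith
      have h2 : 0 < G η := hGpos η hη
      nlinarith
    apply squeeze_zero' (g := fun η => (C / (1 + η)) ^ 2)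
    · filter_upwards [Filter.eventually_ge_atTop (0 : ℝ)] with η hη
      rw [key η hη]
      positivity
    · filter_upwards [Filter.eventually_ge_atTop (0 : ℝ)] with η hη
      exact hbound η hη
    · have h1 : Filter.Tendsto (fun η : ℝ => C / (1 + η)) Filter.atTop (nhds 0) := by
        apply Filter.Tendsto.div_atTop tendsto_const_nhds
        exact Filter.tendsto_atTop_add_const_left _ 1 Filter.tendsto_id
      have := h1.pow 2
      norm_num at this
      exact this
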